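/- Let U ⊆ ℝ^n be open, w : ℝ → ℝ a positive function, and let ψ, χ : U → ℝ^{n+2} and τ : U → ℝ be differentiable at x ∈ U, with ⟨ψ(y), ψ(y)⟩ = 1, ⟨χ(y), χ(y)⟩ = 1 and ⟨ψ(y), χ(y)⟩ = 0 for all y ∈ U (Euclidean inner product). Let θ : ℝ → ℝ be differentiable with θ'(t) = 1/w(t) for all t, and suppose ⟨dψ_x(v), χ(x)⟩ = dτ_x(v)/w(τ(x)) for all v ∈ ℝ^n. Define φ := cos(θ∘τ)·ψ − sin(θ∘τ)·χ and ν := sin(θ∘τ)·ψ + cos(θ∘τ)·χ. Then ⟨dφ_x(v), ν(x)⟩ = 0 for all v ∈ ℝ^n. -/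

import Mathlib

open scoped RealInnerProductSpace

/-- Conclusion of Section 2 in the spherical case: with the normalization `θ' = 1/w`
and `⟨dψ_x(v), χ(x)⟩ = dτ_x(v)/w(τ(x))`, the map `ν` is the Gauss map of `φ`,
i.e. `⟨dφ_x(v), ν(x)⟩ = 0` for all `v`. -/
theorem stmt5 {n : ℕ} (U : Set (EuclideanSpace ℝ (Fin n))) (hU : IsOpen U)
    (w : ℝ → ℝ) (hw : ∀ t, 0 < w t)
    (x : EuclideanSpace ℝ (Fin n)) (hx : x ∈ U)
    (ψ χ : EuclideanSpace ℝ (Fin n) → EuclideanSpace ℝ (Fin (n + 2)))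
    (τ : EuclideanSpace ℝ (Fin n) → ℝ)
    (hψ : DifferentiableAt ℝ ψ x) (hχ : DifferentiableAt ℝ χ x)
    (hτ : DifferentiableAt ℝ τ x)
    (hψψ : ∀ y ∈ U, ⟪ψ y, ψ y⟫ = 1)
    (hχχ : ∀ y ∈ U, ⟪χ y, χ y⟫ = 1)
    (hψχ : ∀ y ∈ U, ⟪ψ y, χ y⟫ = 0)
    (θ : ℝ → ℝ) (hθ : ∀ t, HasDerivAt θ (1 / w t) t)
    (hdψχ : ∀ v, ⟪fderiv ℝ ψ x v, χ x⟫ = fderiv ℝ τ x v / w (τ x))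
    (φ ν : EuclideanSpace ℝ (Fin n) → EuclideanSpace ℝ (Fin (n + 2)))
    (hφ : ∀ y, φ y = Real.cos (θ (τ y)) • ψ y - Real.sin (θ (τ y)) • χ y)
    (hν : ∀ y, ν y = Real.sin (θ (τ y)) • ψ y + Real.cos (θ (τ y)) • χ y) :
    ∀ v, ⟪fderiv ℝ φ x v, ν x⟫ = 0 := by
  intro v
  set Dτ := fderiv ℝ τ x with hDτ
  set Dψ := fderiv ℝ ψ x with hDψ
  set Dχ := fderiv ℝ χ x with hDχ
  have hψ' : HasFDerivAt ψ Dψ x := hψ.hasFDerivAt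
  have hχ' : HasFDerivAt χ Dχ x := hχ.hasFDerivAt
  have hτ' : HasFDerivAt τ Dτ x := hτ.hasFDerivAt
  have hmem : U ∈ nhds x := hU.mem_nhds hx
  -- derivative facts from the constancy of the inner products
  have key : ∀ (f g : EuclideanSpace ℝ (Fin n) → EuclideanSpace ℝ (Fin (n + 2)))
      (Df Dg : EuclideanSpace ℝ (Fin n) →L[ℝ] EuclideanSpace ℝ (Fin (n + 2)))
      (c : ℝ), HasFDerivAt f Df x → HasFDerivAt g Dg x →
      (∀ y ∈ U, ⟪f y, g y⟫ = c) → ⟪f x, Dg v⟫ + ⟪Df v, g x⟫ = 0 := by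
    intro f g Df Dg c hf hg hinner
    have h1 : HasFDerivAt (fun y => ⟪f y, g y⟫)
        ((fderivInnerCLM ℝ (f x, g x)).comp <| Df.prod Dg) x := hf.inner ℝ hg
    have h2 : HasFDerivAt (fun y => ⟪f y, g y⟫)
        (0 : EuclideanSpace ℝ (Fin n) →L[ℝ] ℝ) x := by
      have hc : HasFDerivAt (fun _ : EuclideanSpace ℝ (Fin n) => c)
          (0 : EuclideanSpace ℝ (Fin n) →L[ℝ] ℝ) x := hasFDerivAt_const c x
      apply hc.congr_of_eventuallyEq
      filter_upwards [hmem] with y hy using hinner y hy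
    have := h1.unique h2
    have := congrArg (fun L => L v) this
    simpa [fderivInnerCLM_apply] using this
  have hA : ⟪Dψ v, ψ x⟫ = 0 := by
    have := key ψ ψ Dψ Dψ 1 hψ' hψ' hψψ
    have hsymm : ⟪ψ x, Dψ v⟫ = ⟪Dψ v, ψ x⟫ := real_inner_comm _ _
    linarith
  have hC : ⟪Dχ v, χ x⟫ = 0 := by
    have := key χ χ Dχ Dχ 1 hχ' hχ' hχχ
    have hsymm : ⟪χ x, Dχ v⟫ = ⟪Dχ v, χ x⟫ := real_inner_comm _ _
    linarith
  have hE : ⟪Dχ v, ψ x⟫ = -(Dτ v / w (τ x)) := by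
    have := key ψ χ Dψ Dχ 0 hψ' hχ' hψχ
    have hsymm : ⟪ψ x, Dχ v⟫ = ⟪Dχ v, ψ x⟫ := real_inner_comm _ _
    have hB := hdψχ v
    linarith
  have hB := hdψχ v
  -- derivative of θ ∘ τ
  have hθτ : HasFDerivAt (fun y => θ (τ y)) ((1 / w (τ x)) • Dτ) x :=
    (hθ (τ x)).comp_hasFDerivAt x hτ'
  have hcos : HasFDerivAt (fun y => Real.cos (θ (τ y)))
      ((-Real.sin (θ (τ x))) • ((1 / w (τ x)) • Dτ)) x :=
    by have := (Real.hasDerivAt_cos (θ (τ x))).comp_hasFDerivAt x hθτ; exact this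
  have hsin : HasFDerivAt (fun y => Real.sin (θ (τ y)))
      ((Real.cos (θ (τ x))) • ((1 / w (τ x)) • Dτ)) x :=
    by have := (Real.hasDerivAt_sin (θ (τ x))).comp_hasFDerivAt x hθτ; exact this
  have hφ' : HasFDerivAt φ
      ((Real.cos (θ (τ x)) • Dψ + ((-Real.sin (θ (τ x))) • ((1 / w (τ x)) • Dτ)).smulRight (ψ x))
        - (Real.sin (θ (τ x)) • Dχ +
            ((Real.cos (θ (τ x))) • ((1 / w (τ x)) • Dτ)).smulRight (χ x))) x := by
    apply ((hcos.smul hψ').sub (hsin.smul hχ')).congr_of_eventuallyEq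
    filter_upwards with y using hφ y
  rw [hφ'.fderiv, hν x]
  set s := Real.sin (θ (τ x))
  set c := Real.cos (θ (τ x))
  set α := Dτ v
  have hwne : w (τ x) ≠ 0 := (hw (τ x)).ne'
  simp only [ContinuousLinearMap.sub_apply, ContinuousLinearMap.add_apply,
    ContinuousLinearMap.coe_smul', Pi.smul_apply, ContinuousLinearMap.smulRight_apply,
    inner_sub_left, inner_add_left, inner_add_right, real_inner_smul_left,
    real_inner_smul_right, smul_eq_mul]
  rw [hA, hB, hC, hE]
  have hψψx : ⟪ψ x, ψ x⟫ = 1 := hψψ x hx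
  have hχχx : ⟪χ x, χ x⟫ = 1 := hχχ x hx
  have hψχx : ⟪ψ x, χ x⟫ = 0 := hψχ x hx
  have hχψx : ⟪χ x, ψ x⟫ = 0 := by rw [real_inner_comm]; exact hψχx
  rw [hψψx, hχχx, hψχx, hχψx]
  have hpyth : s ^ 2 + c ^ 2 = 1 := Real.sin_sq_add_cos_sq _
  field_simp
  ring_nf
  simp only [α]
  ring
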